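/- Let λ > 1 be real and let ℛ_{a,b} be the a×b rectangle polyomino with a,b ∈ ℕ, a ≥ 1, b ≥ 1. Then Per_λ(ℛ_{a,b}) = 2a Σ_{i=1}^{b} ζ(λ,i) + 2b Σ_{i=1}^{a} ζ(λ,i), where ζ(λ,i) = Σ_{r=0}^{∞} 1/(r+i)^λ is the Hurwitz zeta function. -/

import Mathlib

/-- The bi-axial fractional interaction between two lattice sites. -/
noncomputable def biAxialWeight (lam : ℝ) (x y : ℤ × ℤ) : ℝ :=
  if x.1 = y.1 ∧ x.2 ≠ y.2 then 1 / ((|x.2 - y.2| : ℤ) : ℝ) ^ lam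
  else if x.2 = y.2 ∧ x.1 ≠ y.1 then 1 / ((|x.1 - y.1| : ℤ) : ℝ) ^ lam
  else 0

/-- The nonlocal bi-axial perimeter of a polyomino, identified with the finite
set of centers of its unit squares. -/
noncomputable def nonlocalPer (lam : ℝ) (P : Finset (ℤ × ℤ)) : ℝ :=
  ∑ x ∈ P, ∑' y : {y : ℤ × ℤ // y ∉ P}, biAxialWeight lam x (y : ℤ × ℤ)

/-- The Hurwitz zeta function ζ(λ, i) = Σ_{r≥0} (r+i)^{-λ} as a real series. -/
noncomputable def hzeta (lam : ℝ) (i : ℕ) : ℝ := ∑' r : ℕ, 1 / ((r : ℝ) + i) ^ lam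

/-- The a×b rectangle polyomino (b columns, a rows). -/
noncomputable def rectP (a b : ℕ) : Finset (ℤ × ℤ) := Finset.Ico (0 : ℤ) b ×ˢ Finset.Ico (0 : ℤ) a

lemma summable_hz (lam : ℝ) (hlam : 1 < lam) (i : ℕ) :
    Summable (fun r : ℕ => 1 / ((r : ℝ) + i) ^ lam) := by
  have h := Real.summable_one_div_nat_rpow.mpr hlam
  have h2 := (summable_nat_add_iff i).mpr h
  exact h2.congr fun n => by push_cast; ring_nf

/-- The tail interaction series along a line. -/
noncomputable def lineF (lam : ℝ) (a q : ℕ) : ℤ → ℝ :=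
  fun t => if t < 0 ∨ (a : ℤ) ≤ t then 1 / ((|(q : ℤ) - t| : ℤ) : ℝ) ^ lam else 0

lemma lineF_pos (lam : ℝ) (a q : ℕ) (hq : q < a) :
    (fun n : ℕ => lineF lam a q ((n : ℤ) + a)) =
      fun n : ℕ => 1 / ((n : ℝ) + (a - q : ℕ)) ^ lam := by
  funext n
  have hcond : ((n : ℤ) + a < 0 ∨ (a : ℤ) ≤ (n : ℤ) + a) := by right; omega
  rw [lineF, if_pos hcond]
  have habs : |(q : ℤ) - ((n : ℤ) + a)| = (n : ℤ) + (a - q : ℕ) := by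
    rw [abs_of_nonpos (by omega), Int.ofNat_sub hq.le]; ring
  rw [habs]; push_cast; ring_nf

lemma lineF_neg (lam : ℝ) (a q : ℕ) :
    (fun n : ℕ => lineF lam a q (-((n : ℤ) + 1))) =
      fun n : ℕ => 1 / ((n : ℝ) + (q + 1 : ℕ)) ^ lam := by
  funext n
  have hcond : (-((n : ℤ) + 1) < 0 ∨ (a : ℤ) ≤ -((n : ℤ) + 1)) := by left; omega
  rw [lineF, if_pos hcond]
  have habs : |(q : ℤ) - (-((n : ℤ) + 1))| = (n : ℤ) + (q + 1 : ℕ) := by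
    rw [abs_of_nonneg (by omega)]; push_cast; ring
  rw [habs]; push_cast; ring_nf

lemma lineF_summable_nat (lam : ℝ) (hlam : 1 < lam) (a q : ℕ) (hq : q < a) :
    Summable (fun n : ℕ => lineF lam a q (n : ℤ)) := by
  refine (summable_nat_add_iff a).mp ?_
  have h2 : (fun n : ℕ => lineF lam a q (((n + a : ℕ) : ℤ))) =
      fun n : ℕ => 1 / ((n : ℝ) + (a - q : ℕ)) ^ lam := by
    rw [← lineF_pos lam a q hq]; funext n; push_cast; ring_nf
  rw [h2]
  exact summable_hz lam hlam _

lemma lineF_summable (lam : ℝ) (hlam : 1 < lam) (a q : ℕ) (hq : q < a) :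
    Summable (lineF lam a q) := by
  refine Summable.of_nat_of_neg_add_one (lineF_summable_nat lam hlam a q hq) ?_
  rw [lineF_neg]
  exact summable_hz lam hlam _

lemma lineF_tsum (lam : ℝ) (hlam : 1 < lam) (a q : ℕ) (hq : q < a) :
    ∑' t : ℤ, lineF lam a q t = hzeta lam (a - q) + hzeta lam (q + 1) := by
  have hneg : Summable (fun n : ℕ => lineF lam a q (-((n : ℤ) + 1))) := by
    rw [lineF_neg]; exact summable_hz lam hlam _
  rw [tsum_of_nat_of_neg_add_one (lineF_summable_nat lam hlam a q hq) hneg]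
  congr 1
  · have hinj : Function.Injective (fun n : ℕ => n + a) := add_left_injective a
    have hsupp : Function.support (fun n : ℕ => lineF lam a q (n : ℤ)) ⊆
        Set.range (fun n : ℕ => n + a) := by
      intro n hn
      rcases lt_or_ge n a with h | h
      · exfalso; apply hn; simp only [lineF]; rw [if_neg]; push_neg; omega
      · exact ⟨n - a, by simpa using Nat.sub_add_cancel h⟩
    rw [← hinj.tsum_eq hsupp]
    have : (fun n : ℕ => lineF lam a q (((n + a : ℕ) : ℤ))) =
        fun n : ℕ => 1 / ((n : ℝ) + (a - q : ℕ)) ^ lam := by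
      rw [← lineF_pos lam a q hq]; funext n; push_cast; ring_nf
    simp only [hzeta]
    exact tsum_congr fun n => congrFun this n
  · rw [lineF_neg]; rfl

lemma split_eq (lam : ℝ) (a b p q : ℕ) (hp : p < b) (hq : q < a) (u v : ℤ) :
    Set.indicator {y : ℤ × ℤ | y ∉ rectP a b} (biAxialWeight lam ((p:ℤ),(q:ℤ))) (u, v)
      = (if u = (p:ℤ) then lineF lam a q v else 0)
        + (if v = (q:ℤ) then lineF lam b p u else 0) := by
  have hmem : ((u,v) ∈ rectP a b) ↔ (0 ≤ u ∧ u < (b:ℤ)) ∧ (0 ≤ v ∧ v < (a:ℤ)) := by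
    simp [rectP, Finset.mem_Ico]
  simp only [Set.indicator_apply, Set.mem_setOf_eq, biAxialWeight, lineF, hmem]
  split_ifs <;>
    first
      | omega
      | (rw [add_zero])
      | (rw [zero_add])

lemma inner_tsum (lam : ℝ) (hlam : 1 < lam) (a b p q : ℕ) (hp : p < b) (hq : q < a) :
    ∑' y : {y : ℤ × ℤ // y ∉ rectP a b}, biAxialWeight lam ((p : ℤ), (q : ℤ)) (y : ℤ × ℤ)
      = (hzeta lam (a - q) + hzeta lam (q + 1)) + (hzeta lam (b - p) + hzeta lam (p + 1)) := by
  have h0 : (∑' y : {y : ℤ × ℤ // y ∉ rectP a b}, biAxialWeight lam ((p:ℤ),(q:ℤ)) (y : ℤ × ℤ))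
      = ∑' y : ℤ × ℤ,
          Set.indicator {y : ℤ × ℤ | y ∉ rectP a b} (biAxialWeight lam ((p:ℤ),(q:ℤ))) y :=
    tsum_subtype _ _
  rw [h0]
  have hsplit : Set.indicator {y : ℤ × ℤ | y ∉ rectP a b}
      (biAxialWeight lam ((p:ℤ),(q:ℤ)))
      = fun y : ℤ × ℤ => (if y.1 = (p:ℤ) then lineF lam a q y.2 else 0)
        + (if y.2 = (q:ℤ) then lineF lam b p y.1 else 0) := by
    funext y
    obtain ⟨u, v⟩ := y
    exact split_eq lam a b p q hp hq u v
  rw [hsplit]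
  set Fc : ℤ × ℤ → ℝ := fun y => if y.1 = (p:ℤ) then lineF lam a q y.2 else 0 with hFc
  set Fr : ℤ × ℤ → ℝ := fun y => if y.2 = (q:ℤ) then lineF lam b p y.1 else 0 with hFr
  have hinjc : Function.Injective (fun t : ℤ => ((p:ℤ), t)) := by
    intro s t h; simpa using h
  have hsuppc : Function.support Fc ⊆ Set.range (fun t : ℤ => ((p:ℤ), t)) := by
    rintro ⟨u, v⟩ hy
    simp only [hFc, Function.mem_support] at hy
    by_cases h : u = (p:ℤ)
    · exact ⟨v, by rw [h]⟩
    · exact absurd (if_neg h) hy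
  have hsuppc' : ∀ y ∉ Set.range (fun t : ℤ => ((p:ℤ), t)), Fc y = 0 := by
    intro y hy
    by_contra h
    exact hy (hsuppc h)
  have hcompc : Fc ∘ (fun t : ℤ => ((p:ℤ), t)) = lineF lam a q := by
    funext t; simp [hFc]
  have hsc : Summable Fc := (hinjc.summable_iff hsuppc').mp
    (by rw [hcompc]; exact lineF_summable lam hlam a q hq)
  have htc : ∑' y : ℤ × ℤ, Fc y = hzeta lam (a - q) + hzeta lam (q + 1) := by
    rw [← hinjc.tsum_eq hsuppc]
    have : ∑' t : ℤ, Fc ((p:ℤ), t) = ∑' t : ℤ, lineF lam a q t :=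
      tsum_congr fun t => congrFun hcompc t
    rw [this, lineF_tsum lam hlam a q hq]
  have hinjr : Function.Injective (fun t : ℤ => (t, (q:ℤ))) := by
    intro s t h; simpa using h
  have hsuppr : Function.support Fr ⊆ Set.range (fun t : ℤ => (t, (q:ℤ))) := by
    rintro ⟨u, v⟩ hy
    simp only [hFr, Function.mem_support] at hy
    by_cases h : v = (q:ℤ)
    · exact ⟨u, by rw [h]⟩
    · exact absurd (if_neg h) hy
  have hsuppr' : ∀ y ∉ Set.range (fun t : ℤ => (t, (q:ℤ))), Fr y = 0 := by
    intro y hy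
    by_contra h
    exact hy (hsuppr h)
  have hcompr : Fr ∘ (fun t : ℤ => (t, (q:ℤ))) = lineF lam b p := by
    funext t; simp [hFr]
  have hsr : Summable Fr := (hinjr.summable_iff hsuppr').mp
    (by rw [hcompr]; exact lineF_summable lam hlam b p hp)
  have htr : ∑' y : ℤ × ℤ, Fr y = hzeta lam (b - p) + hzeta lam (p + 1) := by
    rw [← hinjr.tsum_eq hsuppr]
    have : ∑' t : ℤ, Fr (t, (q:ℤ)) = ∑' t : ℤ, lineF lam b p t :=
      tsum_congr fun t => congrFun hcompr t
    rw [this, lineF_tsum lam hlam b p hp]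
  rw [Summable.tsum_add hsc hsr, htc, htr]

lemma int_sum_eq (n : ℕ) (g : ℤ → ℝ) :
    ∑ t ∈ Finset.Ico (0:ℤ) (n:ℤ), g t = ∑ t ∈ Finset.range n, g (t:ℤ) := by
  refine Finset.sum_nbij' (fun t => t.toNat) (fun t => (t:ℤ)) ?_ ?_ ?_ ?_ ?_
  · intro t ht; simp_all [Finset.mem_Ico, Finset.mem_range]
  · intro t ht; simp_all [Finset.mem_Ico, Finset.mem_range]
  · intro t ht; simp_all [Finset.mem_Ico]
  · intro t ht; simp
  · intro t ht
    simp only [Finset.mem_Ico] at ht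
    rw [Int.toNat_of_nonneg ht.1]

lemma shift_sum (a : ℕ) (hz : ℕ → ℝ) :
    ∑ v ∈ Finset.range a, hz (v + 1) = ∑ i ∈ Finset.Icc 1 a, hz i := by
  rw [← Finset.Ico_add_one_right_eq_Icc, Finset.sum_Ico_eq_sum_range]
  simp [add_comm]

lemma reflect_sum (a : ℕ) (hz : ℕ → ℝ) :
    ∑ v ∈ Finset.range a, hz (a - v) = ∑ i ∈ Finset.Icc 1 a, hz i := by
  rw [← shift_sum a hz, ← Finset.sum_range_reflect (fun j => hz (j+1)) a]
  refine Finset.sum_congr rfl fun v hv => ?_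
  simp only [Finset.mem_range] at hv
  congr 1
  omega

theorem stmt_5 (lam : ℝ) (hlam : 1 < lam) (a b : ℕ) (ha : 1 ≤ a) (hb : 1 ≤ b) :
    nonlocalPer lam (rectP a b) =
      2 * a * ∑ i ∈ Finset.Icc 1 b, hzeta lam i
        + 2 * b * ∑ i ∈ Finset.Icc 1 a, hzeta lam i := by
  have h1 : nonlocalPer lam (rectP a b)
      = ∑ u ∈ Finset.Ico (0:ℤ) (b:ℤ), ∑ v ∈ Finset.Ico (0:ℤ) (a:ℤ),
          ∑' y : {y : ℤ × ℤ // y ∉ rectP a b}, biAxialWeight lam (u, v) (y : ℤ × ℤ) :=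
    Finset.sum_product ..
  rw [h1, int_sum_eq b, Finset.sum_congr rfl fun p _ => int_sum_eq a _]
  have h2 : ∀ p ∈ Finset.range b, ∀ q ∈ Finset.range a,
      (∑' y : {y : ℤ × ℤ // y ∉ rectP a b}, biAxialWeight lam ((p:ℤ), (q:ℤ)) (y : ℤ × ℤ))
        = (hzeta lam (a - q) + hzeta lam (q + 1)) + (hzeta lam (b - p) + hzeta lam (p + 1)) := by
    intro p hp q hq
    exact inner_tsum lam hlam a b p q (Finset.mem_range.mp hp) (Finset.mem_range.mp hq)
  rw [Finset.sum_congr rfl fun p hp => Finset.sum_congr rfl fun q hq => h2 p hp q hq]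
  simp only [Finset.sum_add_distrib, Finset.sum_const, Finset.card_range, nsmul_eq_mul]
  simp only [← Finset.mul_sum]
  rw [reflect_sum a (hzeta lam), shift_sum a (hzeta lam), reflect_sum b (hzeta lam),
    shift_sum b (hzeta lam)]
  ring
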